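/- arXiv:1402.3388 — 3 statements merged into one kernel-verified Lean document; each statement's English description precedes it below -/
import Mathlib

section
/- For every LTL formula φ in negation normal form and every letter ν ∈ 2^Ap, the formula afG(φ,ν) propositionally implies af(φ,ν) under the assumption of all G-subformulas: precisely, af(φ,ν) is propositionally implied by afG(φ,ν) ∧ ⋀_{Gψ ∈ GG(φ)} (Gψ → af(ψ,ν)). -/
namespace LTLF

/-- LTL formulas in negation normal form over atomic propositions `Ap`. -/
inductive LTL (Ap : Type) : Type
  | tt : LTL Ap
  | ff : LTL Ap
  | atom : Ap → LTL Ap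
  | natom : Ap → LTL Ap
  | and : LTL Ap → LTL Ap → LTL Ap
  | or : LTL Ap → LTL Ap → LTL Ap
  | next : LTL Ap → LTL Ap
  | fut : LTL Ap → LTL Ap
  | glob : LTL Ap → LTL Ap
  | untl : LTL Ap → LTL Ap → LTL Ap

variable {Ap : Type}

/-- Infinite words over the alphabet `2^Ap`. -/
abbrev Word (Ap : Type) := ℕ → Set Ap

/-- The suffix `w_k`. -/
def suffix (w : Word Ap) (k : ℕ) : Word Ap := fun i => w (i + k)

/-- Standard LTL semantics on infinite words. -/
def Sat : LTL Ap → Word Ap → Prop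
  | .tt, _ => True
  | .ff, _ => False
  | .atom a, w => a ∈ w 0
  | .natom a, w => a ∉ w 0
  | .and φ ψ, w => Sat φ w ∧ Sat ψ w
  | .or φ ψ, w => Sat φ w ∨ Sat ψ w
  | .next φ, w => Sat φ (suffix w 1)
  | .fut φ, w => ∃ k, Sat φ (suffix w k)
  | .glob φ, w => ∀ k, Sat φ (suffix w k)
  | .untl φ ψ, w => ∃ k, Sat ψ (suffix w k) ∧ ∀ j < k, Sat φ (suffix w j)

open Classical in
/-- The "after function" `af(φ, ν)`. -/
noncomputable def af : LTL Ap → Set Ap → LTL Ap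
  | .tt, _ => .tt
  | .ff, _ => .ff
  | .atom a, ν => if a ∈ ν then .tt else .ff
  | .natom a, ν => if a ∈ ν then .ff else .tt
  | .and φ ψ, ν => .and (af φ ν) (af ψ ν)
  | .or φ ψ, ν => .or (af φ ν) (af ψ ν)
  | .next φ, _ => φ
  | .fut φ, ν => .or (af φ ν) (.fut φ)
  | .glob φ, ν => .and (af φ ν) (.glob φ)
  | .untl φ ψ, ν => .or (af ψ ν) (.and (af φ ν) (.untl φ ψ))

/-- `af` extended to finite words. -/
noncomputable def afw (φ : LTL Ap) (u : List (Set Ap)) : LTL Ap := u.foldl af φ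

open Classical in
/-- The variant `afG`, identical to `af` except `afG(Gφ, ν) = Gφ`. -/
noncomputable def afG : LTL Ap → Set Ap → LTL Ap
  | .tt, _ => .tt
  | .ff, _ => .ff
  | .atom a, ν => if a ∈ ν then .tt else .ff
  | .natom a, ν => if a ∈ ν then .ff else .tt
  | .and φ ψ, ν => .and (afG φ ν) (afG ψ ν)
  | .or φ ψ, ν => .or (afG φ ν) (afG ψ ν)
  | .next φ, _ => φ
  | .fut φ, ν => .or (afG φ ν) (.fut φ)
  | .glob φ, _ => .glob φ
  | .untl φ ψ, ν => .or (afG ψ ν) (.and (afG φ ν) (.untl φ ψ))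

/-- `afG` extended to finite words. -/
noncomputable def afGw (φ : LTL Ap) (u : List (Set Ap)) : LTL Ap := u.foldl afG φ

/-- The finite infix `w[i..j] = w[i] w[i+1] ⋯ w[j]`. -/
def infixW (w : Word Ap) (i j : ℕ) : List (Set Ap) :=
  (List.range (j + 1 - i)).map (fun k => w (i + k))

/-- The finite prefix `w[0..i]`. -/
def prefixW (w : Word Ap) (i : ℕ) : List (Set Ap) := infixW w 0 i

/-- Concatenation of a finite word with an infinite word. -/
def cat (u : List (Set Ap)) (w : Word Ap) : Word Ap :=
  fun k => if h : k < u.length then u.get ⟨k, h⟩ else w (k - u.length)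

/-- Propositional evaluation of a formula under a valuation `v`, treating
literals and temporal formulas (`X`, `F`, `G`, `U`) as opaque propositional atoms. -/
def propSat (v : LTL Ap → Prop) : LTL Ap → Prop
  | .tt => True
  | .ff => False
  | .and φ ψ => propSat v φ ∧ propSat v ψ
  | .or φ ψ => propSat v φ ∨ propSat v ψ
  | φ => v φ

/-- A valuation is consistent on literals: `a` and `¬a` get complementary values. -/
def LitConsistent (v : LTL Ap → Prop) : Prop :=
  ∀ a : Ap, v (.atom a) ↔ ¬ v (.natom a)

/-- Propositional implication `φ ⊨_p ψ`. -/
def PropImp (φ ψ : LTL Ap) : Prop :=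
  ∀ v : LTL Ap → Prop, LitConsistent v → propSat v φ → propSat v ψ

/-- Propositional equivalence `φ ≡_p ψ`. -/
def PropEquiv (φ ψ : LTL Ap) : Prop :=
  ∀ v : LTL Ap → Prop, LitConsistent v → (propSat v φ ↔ propSat v ψ)

/-- `⋀_{χ ∈ H} χ ⊨_p ψ` : the (possibly infinite) conjunction of the
hypotheses `H` propositionally implies `ψ`. -/
def PropImpSet (H : Set (LTL Ap)) (ψ : LTL Ap) : Prop :=
  ∀ v : LTL Ap → Prop, LitConsistent v → (∀ χ ∈ H, propSat v χ) → propSat v ψ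

/-- The list of subformulas of a formula. -/
def subfs : LTL Ap → List (LTL Ap)
  | .tt => [.tt]
  | .ff => [.ff]
  | .atom a => [.atom a]
  | .natom a => [.natom a]
  | .and φ ψ => .and φ ψ :: (subfs φ ++ subfs ψ)
  | .or φ ψ => .or φ ψ :: (subfs φ ++ subfs ψ)
  | .next φ => .next φ :: subfs φ
  | .fut φ => .fut φ :: subfs φ
  | .glob φ => .glob φ :: subfs φ
  | .untl φ ψ => .untl φ ψ :: (subfs φ ++ subfs ψ)

/-- `Gψ` is a `G`-subformula of `φ`. -/
def GSub (φ ψ : LTL Ap) : Prop := LTL.glob ψ ∈ subfs φ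

/-- A formula is `G`-free if it contains no occurrence of `G`. -/
def GFree : LTL Ap → Prop
  | .glob _ => False
  | .and φ ψ => GFree φ ∧ GFree ψ
  | .or φ ψ => GFree φ ∧ GFree ψ
  | .next φ => GFree φ
  | .fut φ => GFree φ
  | .untl φ ψ => GFree φ ∧ GFree ψ
  | _ => True

/-- `ind(w, ψ)`: the least index `j` with `w_j ⊨ Gψ`. -/
noncomputable def ind (w : Word Ap) (ψ : LTL Ap) : ℕ :=
  sInf {j | Sat (.glob ψ) (suffix w j)}

/-- `afG(φ,ν) ∧ ⋀_{Gψ ∈ GG(φ)} (Gψ → af(ψ,ν)) ⊨_p af(φ,ν)`. -/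
theorem afG_with_G_assumptions_implies_af {Ap : Type} (φ : LTL Ap) (ν : Set Ap)
    (v : LTL Ap → Prop) (hv : LitConsistent v)
    (h0 : propSat v (afG φ ν))
    (h1 : ∀ ψ : LTL Ap, GSub φ ψ → (propSat v (LTL.glob ψ) → propSat v (af ψ ν))) :
    propSat v (af φ ν) := by
  induction φ with
  | tt => exact h0
  | ff => exact h0
  | atom a => exact h0
  | natom a => exact h0
  | and φ ψ ihφ ihψ =>
      obtain ⟨hφ, hψ⟩ := h0
      exact ⟨ihφ hφ (fun χ hχ => h1 χ (by simp [GSub, subfs] at hχ ⊢; tauto)),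
             ihψ hψ (fun χ hχ => h1 χ (by simp [GSub, subfs] at hχ ⊢; tauto))⟩
  | or φ ψ ihφ ihψ =>
      cases h0 with
      | inl hφ => exact Or.inl (ihφ hφ (fun χ hχ => h1 χ (by simp [GSub, subfs] at hχ ⊢; tauto)))
      | inr hψ => exact Or.inr (ihψ hψ (fun χ hχ => h1 χ (by simp [GSub, subfs] at hχ ⊢; tauto)))
  | next φ ih => exact h0
  | fut φ ih =>
      cases h0 with
      | inl hφ => exact Or.inl (ih hφ (fun χ hχ => h1 χ (by simp [GSub, subfs] at hχ ⊢; tauto)))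
      | inr h => exact Or.inr h
  | glob φ ih =>
      exact ⟨h1 φ (by simp [GSub, subfs]) h0, h0⟩
  | untl φ ψ ihφ ihψ =>
      cases h0 with
      | inl hψ => exact Or.inl (ihψ hψ (fun χ hχ => h1 χ (by simp [GSub, subfs] at hχ ⊢; tauto)))
      | inr h =>
          exact Or.inr ⟨ihφ h.1 (fun χ hχ => h1 χ (by simp [GSub, subfs] at hχ ⊢; tauto)), h.2⟩

end LTLF
end

section
/- Let φ be an LTL formula in negation normal form over a finite set Ap of atomic propositions. Then the set ReachG(φ) = { afG(φ, w) : w ∈ (2^Ap)* }, taken up to propositional equivalence, is finite. -/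
namespace LTLF

variable {Ap : Type}

theorem propEquiv_refl {Ap : Type} (φ : LTL Ap) : PropEquiv φ φ :=
  fun _ _ => Iff.rfl

theorem propEquiv_symm {Ap : Type} {φ ψ : LTL Ap} (h : PropEquiv φ ψ) :
    PropEquiv ψ φ := fun v hv => (h v hv).symm

theorem propEquiv_trans {Ap : Type} {φ ψ χ : LTL Ap}
    (h1 : PropEquiv φ ψ) (h2 : PropEquiv ψ χ) : PropEquiv φ χ :=
  fun v hv => (h1 v hv).trans (h2 v hv)

/-- Propositional equivalence as a setoid on formulas. -/
def propSetoid (Ap : Type) : Setoid (LTL Ap) :=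
  ⟨PropEquiv, ⟨propEquiv_refl, propEquiv_symm, propEquiv_trans⟩⟩

/-- Propositional atoms: leaves under `and`/`or`. -/
def atoms : LTL Ap → List (LTL Ap)
  | .and φ ψ => atoms φ ++ atoms ψ
  | .or φ ψ => atoms φ ++ atoms ψ
  | .tt => [.tt]
  | .ff => [.ff]
  | .atom a => [.atom a]
  | .natom a => [.natom a]
  | .next φ => [.next φ]
  | .fut φ => [.fut φ]
  | .glob φ => [.glob φ]
  | .untl φ ψ => [.untl φ ψ]

lemma propSat_congr {v v' : LTL Ap → Prop} :
    ∀ {ψ : LTL Ap}, (∀ x ∈ atoms ψ, (v x ↔ v' x)) →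
      (propSat v ψ ↔ propSat v' ψ) := by
  intro ψ
  induction ψ with
  | and φ ψ ih1 ih2 =>
      intro h
      simp only [atoms, List.mem_append] at h
      exact and_congr (ih1 fun x hx => h x (Or.inl hx)) (ih2 fun x hx => h x (Or.inr hx))
  | or φ ψ ih1 ih2 =>
      intro h
      simp only [atoms, List.mem_append] at h
      exact or_congr (ih1 fun x hx => h x (Or.inl hx)) (ih2 fun x hx => h x (Or.inr hx))
  | tt => intro _; exact Iff.rfl
  | ff => intro _; exact Iff.rfl
  | atom a => intro h; exact h _ (by simp [atoms])
  | natom a => intro h; exact h _ (by simp [atoms])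
  | next φ _ => intro h; exact h _ (by simp [atoms])
  | fut φ _ => intro h; exact h _ (by simp [atoms])
  | glob φ _ => intro h; exact h _ (by simp [atoms])
  | untl φ ψ _ _ => intro h; exact h _ (by simp [atoms])

lemma mem_subfs_self : ∀ ψ : LTL Ap, ψ ∈ subfs ψ := by
  intro ψ; cases ψ <;> simp [subfs]

lemma subfs_trans : ∀ {φ ψ χ : LTL Ap}, ψ ∈ subfs φ → χ ∈ subfs ψ → χ ∈ subfs φ := by
  intro φ
  induction φ with
  | and φ1 φ2 ih1 ih2 =>
      intro ψ χ h1 h2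
      simp only [subfs, List.mem_cons, List.mem_append] at h1 ⊢
      rcases h1 with h1 | h1 | h1
      · subst h1
        simpa [subfs] using h2
      · exact Or.inr (Or.inl (ih1 h1 h2))
      · exact Or.inr (Or.inr (ih2 h1 h2))
  | or φ1 φ2 ih1 ih2 =>
      intro ψ χ h1 h2
      simp only [subfs, List.mem_cons, List.mem_append] at h1 ⊢
      rcases h1 with h1 | h1 | h1
      · subst h1
        simpa [subfs] using h2
      · exact Or.inr (Or.inl (ih1 h1 h2))
      · exact Or.inr (Or.inr (ih2 h1 h2))
  | untl φ1 φ2 ih1 ih2 =>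
      intro ψ χ h1 h2
      simp only [subfs, List.mem_cons, List.mem_append] at h1 ⊢
      rcases h1 with h1 | h1 | h1
      · subst h1
        simpa [subfs] using h2
      · exact Or.inr (Or.inl (ih1 h1 h2))
      · exact Or.inr (Or.inr (ih2 h1 h2))
  | next φ1 ih =>
      intro ψ χ h1 h2
      simp only [subfs, List.mem_cons] at h1 ⊢
      rcases h1 with h1 | h1
      · subst h1; simpa [subfs] using h2
      · exact Or.inr (ih h1 h2)
  | fut φ1 ih =>
      intro ψ χ h1 h2
      simp only [subfs, List.mem_cons] at h1 ⊢
      rcases h1 with h1 | h1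
      · subst h1; simpa [subfs] using h2
      · exact Or.inr (ih h1 h2)
  | glob φ1 ih =>
      intro ψ χ h1 h2
      simp only [subfs, List.mem_cons] at h1 ⊢
      rcases h1 with h1 | h1
      · subst h1; simpa [subfs] using h2
      · exact Or.inr (ih h1 h2)
  | tt => intro ψ χ h1 h2; simp only [subfs, List.mem_singleton] at h1; subst h1; exact h2
  | ff => intro ψ χ h1 h2; simp only [subfs, List.mem_singleton] at h1; subst h1; exact h2
  | atom a => intro ψ χ h1 h2; simp only [subfs, List.mem_singleton] at h1; subst h1; exact h2
  | natom a => intro ψ χ h1 h2; simp only [subfs, List.mem_singleton] at h1; subst h1; exact h2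

lemma atoms_subset_subfs : ∀ {ψ x : LTL Ap}, x ∈ atoms ψ → x ∈ subfs ψ := by
  intro ψ
  induction ψ with
  | and φ ψ ih1 ih2 =>
      intro x hx
      simp only [atoms, List.mem_append] at hx
      simp only [subfs, List.mem_cons, List.mem_append]
      rcases hx with hx | hx
      · exact Or.inr (Or.inl (ih1 hx))
      · exact Or.inr (Or.inr (ih2 hx))
  | or φ ψ ih1 ih2 =>
      intro x hx
      simp only [atoms, List.mem_append] at hx
      simp only [subfs, List.mem_cons, List.mem_append]
      rcases hx with hx | hx
      · exact Or.inr (Or.inl (ih1 hx))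
      · exact Or.inr (Or.inr (ih2 hx))
  | tt => intro x hx; simp [atoms] at hx; subst hx; exact mem_subfs_self _
  | ff => intro x hx; simp [atoms] at hx; subst hx; exact mem_subfs_self _
  | atom a => intro x hx; simp [atoms] at hx; subst hx; exact mem_subfs_self _
  | natom a => intro x hx; simp [atoms] at hx; subst hx; exact mem_subfs_self _
  | next φ _ => intro x hx; simp [atoms] at hx; subst hx; exact mem_subfs_self _
  | fut φ _ => intro x hx; simp [atoms] at hx; subst hx; exact mem_subfs_self _
  | glob φ _ => intro x hx; simp [atoms] at hx; subst hx; exact mem_subfs_self _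
  | untl φ ψ _ _ => intro x hx; simp [atoms] at hx; subst hx; exact mem_subfs_self _

/-- Closure invariant for `afG`. -/
lemma atoms_afG (S : Set (LTL Ap))
    (hS : ∀ χ ψ, χ ∈ S → ψ ∈ subfs χ → ψ ∈ S)
    (htt : LTL.tt ∈ S) (hff : LTL.ff ∈ S) :
    ∀ (ψ : LTL Ap) (ν : Set Ap), (∀ x ∈ atoms ψ, x ∈ S) →
      ∀ x ∈ atoms (afG ψ ν), x ∈ S := by
  intro ψ
  induction ψ with
  | tt => intro ν _ x hx; simp [afG, atoms] at hx; subst hx; exact htt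
  | ff => intro ν _ x hx; simp [afG, atoms] at hx; subst hx; exact hff
  | atom a =>
      intro ν _ x hx
      simp only [afG] at hx
      split at hx <;> simp [atoms] at hx <;> subst hx
      · exact htt
      · exact hff
  | natom a =>
      intro ν _ x hx
      simp only [afG] at hx
      split at hx <;> simp [atoms] at hx <;> subst hx
      · exact hff
      · exact htt
  | and φ ψ ih1 ih2 =>
      intro ν h x hx
      simp only [atoms, List.mem_append] at h
      simp only [afG, atoms, List.mem_append] at hx
      rcases hx with hx | hx
      · exact ih1 ν (fun y hy => h y (Or.inl hy)) x hx
      · exact ih2 ν (fun y hy => h y (Or.inr hy)) x hx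
  | or φ ψ ih1 ih2 =>
      intro ν h x hx
      simp only [atoms, List.mem_append] at h
      simp only [afG, atoms, List.mem_append] at hx
      rcases hx with hx | hx
      · exact ih1 ν (fun y hy => h y (Or.inl hy)) x hx
      · exact ih2 ν (fun y hy => h y (Or.inr hy)) x hx
  | next φ ih =>
      intro ν h x hx
      have hnS : LTL.next φ ∈ S := h (LTL.next φ) (by simp [atoms])
      have hφS : φ ∈ S := hS (LTL.next φ) φ hnS (by simp [subfs, mem_subfs_self])
      simp only [afG] at hx
      exact hS φ x hφS (atoms_subset_subfs hx)
  | fut φ ih =>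
      intro ν h x hx
      have hfS : LTL.fut φ ∈ S := h (LTL.fut φ) (by simp [atoms])
      have hφS : φ ∈ S := hS (LTL.fut φ) φ hfS (by simp [subfs, mem_subfs_self])
      simp only [afG, atoms, List.mem_append] at hx
      rcases hx with hx | hx
      · exact ih ν (fun y hy => hS φ y hφS (atoms_subset_subfs hy)) x hx
      · simp at hx; subst hx; exact hfS
  | glob φ ih =>
      intro ν h x hx
      simp only [afG, atoms, List.mem_singleton] at hx
      subst hx
      exact h (LTL.glob φ) (by simp [atoms])
  | untl φ ψ ih1 ih2 =>
      intro ν h x hx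
      have huS : LTL.untl φ ψ ∈ S := h (LTL.untl φ ψ) (by simp [atoms])
      have hφS : φ ∈ S := hS (LTL.untl φ ψ) φ huS (by simp [subfs, mem_subfs_self])
      have hψS : ψ ∈ S := hS (LTL.untl φ ψ) ψ huS (by simp [subfs, mem_subfs_self])
      simp only [afG, atoms, List.mem_append] at hx
      rcases hx with hx | hx | hx
      · exact ih2 ν (fun y hy => hS ψ y hψS (atoms_subset_subfs hy)) x hx
      · exact ih1 ν (fun y hy => hS φ y hφS (atoms_subset_subfs hy)) x hx
      · simp at hx; subst hx; exact huS

/-- `ReachG(φ) = { afG(φ, u) | u finite word }` is finite up to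
propositional equivalence. -/
theorem reachG_finite {Ap : Type} [Fintype Ap] (φ : LTL Ap) :
    Set.Finite (Set.range fun u : List (Set Ap) =>
      Quotient.mk (propSetoid Ap) (afGw φ u)) := by
  classical
  set S : Set (LTL Ap) := {x | x ∈ (LTL.tt :: LTL.ff :: subfs φ)} with hSdef
  have hSfin : S.Finite := (LTL.tt :: LTL.ff :: subfs φ).finite_toSet
  have htt : LTL.tt ∈ S := by simp [hSdef]
  have hff : LTL.ff ∈ S := by simp [hSdef]
  have hSclosed : ∀ χ ψ, χ ∈ S → ψ ∈ subfs χ → ψ ∈ S := by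
    intro χ ψ hχ hψ
    simp only [hSdef, Set.mem_setOf_eq, List.mem_cons] at hχ ⊢
    rcases hχ with rfl | rfl | hχ
    · simp only [subfs, List.mem_singleton] at hψ; exact Or.inl hψ
    · simp only [subfs, List.mem_singleton] at hψ; exact Or.inr (Or.inl hψ)
    · exact Or.inr (Or.inr (subfs_trans hχ hψ))
  have key : ∀ u : List (Set Ap), ∀ x ∈ atoms (afGw φ u), x ∈ S := by
    have main : ∀ (u : List (Set Ap)) (ψ : LTL Ap), (∀ x ∈ atoms ψ, x ∈ S) →
        ∀ x ∈ atoms (u.foldl afG ψ), x ∈ S := by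
      intro u
      induction u with
      | nil => intro ψ h; exact h
      | cons ν u ih => intro ψ h; exact ih _ (atoms_afG S hSclosed htt hff ψ ν h)
    intro u
    exact main u φ (fun x hx => by
      simp only [hSdef, Set.mem_setOf_eq, List.mem_cons]
      exact Or.inr (Or.inr (atoms_subset_subfs hx)))
  haveI : Finite ↥S := hSfin.to_subtype
  let C := {f : ↥S → Prop // ∃ v : LTL Ap → Prop, LitConsistent v ∧ ∀ s : ↥S, f s ↔ v s.1}
  haveI : Finite C := Subtype.finite
  let sem : LTL Ap → C → Prop := fun ψ c => propSat (Classical.choose c.2) ψ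
  have hsem_resp : ∀ a b : LTL Ap, PropEquiv a b → sem a = sem b := by
    intro a b h
    funext c
    exact propext (h _ (Classical.choose_spec c.2).1)
  let semQ : Quotient (propSetoid Ap) → C → Prop := Quotient.lift sem hsem_resp
  apply Set.Finite.of_finite_image (f := semQ) (Set.toFinite _)
  rintro q1 ⟨u1, rfl⟩ q2 ⟨u2, rfl⟩ heq
  apply Quotient.sound
  intro v hv
  have hc : ∃ v' : LTL Ap → Prop, LitConsistent v' ∧
      ∀ s : ↥S, (fun s : ↥S => v s.1) s ↔ v' s.1 := ⟨v, hv, fun s => Iff.rfl⟩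
  let c : C := ⟨fun s => v s.1, hc⟩
  have hv' := Classical.choose_spec c.2
  have h1 : propSat v (afGw φ u1) ↔ sem (afGw φ u1) c :=
    propSat_congr (fun x hx => hv'.2 ⟨x, key u1 x hx⟩)
  have h2 : propSat v (afGw φ u2) ↔ sem (afGw φ u2) c :=
    propSat_congr (fun x hx => hv'.2 ⟨x, key u2 x hx⟩)
  have heqc : sem (afGw φ u1) c = sem (afGw φ u2) c := congrFun heq c
  rw [h1, h2, heqc]


end LTLF
end

section
/- If φ and ψ are propositionally equivalent LTL formulas, then for every letter ν ∈ 2^Ap, af(φ,ν) and af(ψ,ν) are propositionally equivalent. Consequently af is well-defined on propositional-equivalence classes of formulas. -/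
namespace LTLF

variable {Ap : Type}

lemma propSat_af {Ap : Type} (v : LTL Ap → Prop) (ν : Set Ap) :
    ∀ φ : LTL Ap, propSat v (af φ ν) ↔ propSat (fun χ => propSat v (af χ ν)) φ := by
  intro φ
  induction φ with
  | and φ ψ ih1 ih2 => simp only [af, propSat, ih1, ih2]
  | or φ ψ ih1 ih2 => simp only [af, propSat, ih1, ih2]
  | _ => rfl

/-- `af` is well-defined on propositional-equivalence classes. -/
theorem af_respects_propEquiv {Ap : Type} (φ ψ : LTL Ap) (h : PropEquiv φ ψ)
    (ν : Set Ap) : PropEquiv (af φ ν) (af ψ ν) := by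
  intro v hv
  rw [propSat_af, propSat_af]
  apply h
  intro a
  by_cases ha : a ∈ ν <;> simp [af, propSat, ha]

end LTLF
end
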